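/- There is a bijection between the set ~FY(B_n) = {(∅ = F_0 ⊊ F_1 ⊊ ... ⊊ F_k ⊆ [n], (a_1,...,a_k)) : 1 ≤ a_1 ≤ |F_1|, 1 ≤ a_i ≤ |F_i|−|F_{i−1}|−1 for i ≥ 2} (together with the empty monomial) and the set of extended codes of length n, which sends total degree Σ a_i to index + 1 and is equivariant for the natural S_n-actions. -/

import Mathlib

open Finset

/-- occurrences of the finite value `k` in `α` (`none` plays the role of `∞`) -/
def occE {n : ℕ} (α : Fin n → Option ℕ) (k : ℕ) : ℕ :=
  (Finset.univ.filter fun i => α i = some k).card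

/-- maximum finite entry of `α` -/
def maxValE {n : ℕ} (α : Fin n → Option ℕ) : ℕ :=
  Finset.univ.sup fun i => (α i).getD 0

/-- `(α, f)` is an extended code -/
def IsExtCode {n : ℕ} (α : Fin n → Option ℕ) (f : ℕ → ℕ) : Prop :=
  (∀ k, 1 ≤ k → k ≤ maxValE α → 2 ≤ occE α k) ∧
  (∀ k, 1 ≤ k → k ≤ maxValE α → 1 ≤ f k ∧ f k ≤ occE α k - 1) ∧
  (∀ k, k = 0 ∨ maxValE α < k → f k = 0)

/-- the index of an extended code: `-1` if all entries are `∞`, else `Σ f k` -/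
def extIndex {n : ℕ} (α : Fin n → Option ℕ) (f : ℕ → ℕ) : ℤ :=
  if ∀ i, α i = none then -1 else ((∑ k ∈ Finset.Icc 1 (maxValE α), f k : ℕ) : ℤ)

/-- extended codes of length `n` -/
def ExtCode (n : ℕ) := {p : (Fin n → Option ℕ) × (ℕ → ℕ) // IsExtCode p.1 p.2}

/-- the previous set `F (i-1)` in a chain, with `F (-1) = ∅` -/
def prevSet {n k : ℕ} (F : Fin k → Finset (Fin n)) (i : Fin k) : Finset (Fin n) :=
  if h : 0 < (i : ℕ) then F ⟨(i : ℕ) - 1, Nat.lt_of_le_of_lt (Nat.sub_le _ _) i.isLt⟩ else ∅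

/-- Feichtner--Yuzvinsky basis data for the Chow ring of the Boolean matroid:
a strictly increasing chain `∅ = F₀ ⊊ F₁ ⊊ ⋯ ⊊ F_k ⊆ [n]` together with exponents
`1 ≤ aᵢ ≤ |Fᵢ| - |Fᵢ₋₁| - 1`. -/
def IsFY {n : ℕ} (p : Σ k : ℕ, (Fin k → Finset (Fin n)) × (Fin k → ℕ)) : Prop :=
  StrictMono p.2.1 ∧
  ∀ i : Fin p.1, 1 ≤ p.2.2 i ∧ p.2.2 i + (prevSet p.2.1 i).card < (p.2.1 i).card

/-- total degree `Σ aᵢ` of the monomial data -/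
def FYdeg {n : ℕ} (p : Σ k : ℕ, (Fin k → Finset (Fin n)) × (Fin k → ℕ)) : ℕ :=
  ∑ i, p.2.2 i

/-- the set `FY(B_n)` -/
def FYBn (n : ℕ) := {p : Σ k : ℕ, (Fin k → Finset (Fin n)) × (Fin k → ℕ) // IsFY p}

/-- the action of a permutation of `[n]` on monomial data, replacing each `Fᵢ` by its image -/
def permFY {n : ℕ} (σ : Equiv.Perm (Fin n))
    (p : Σ k : ℕ, (Fin k → Finset (Fin n)) × (Fin k → ℕ)) :
    Σ k : ℕ, (Fin k → Finset (Fin n)) × (Fin k → ℕ) :=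
  ⟨p.1, fun i => (p.2.1 i).image σ, p.2.2⟩

/-- Feichtner--Yuzvinsky-type basis data for the augmented Chow ring of `B_n`:
a strictly increasing chain `∅ = F₀ ⊊ F₁ ⊊ ⋯ ⊊ F_k ⊆ [n]` together with exponents
`1 ≤ a₁ ≤ |F₁|` and `1 ≤ aᵢ ≤ |Fᵢ| - |Fᵢ₋₁| - 1` for `i ≥ 2`
(the case `k = 0` is the empty monomial). -/
def IsAugFY {n : ℕ} (p : Σ k : ℕ, (Fin k → Finset (Fin n)) × (Fin k → ℕ)) : Prop :=
  StrictMono p.2.1 ∧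
  ∀ i : Fin p.1, 1 ≤ p.2.2 i ∧
    (if (i : ℕ) = 0 then p.2.2 i ≤ (p.2.1 i).card
     else p.2.2 i + (prevSet p.2.1 i).card < (p.2.1 i).card)

/-- the set `~FY(B_n)` -/
def AugFYBn (n : ℕ) := {p : Σ k : ℕ, (Fin k → Finset (Fin n)) × (Fin k → ℕ) // IsAugFY p}

namespace Stmt9

variable {n : ℕ}

abbrev D (n : ℕ) := Σ k : ℕ, (Fin k → Finset (Fin n)) × (Fin k → ℕ)

/-- the chain extended to all of ℕ by ∅ -/
def Fat (p : D n) (j : ℕ) : Finset (Fin n) :=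
  if h : j < p.1 then p.2.1 ⟨j, h⟩ else ∅

/-- the exponents extended to all of ℕ by 0 -/
def aAt (p : D n) (j : ℕ) : ℕ :=
  if h : j < p.1 then p.2.2 ⟨j, h⟩ else 0

def prevF (p : D n) (m : ℕ) : Finset (Fin n) :=
  if m = 0 then ∅ else Fat p (m - 1)

/-- the shift: 1 if `a₁ ≥ 2`, else 0 -/
def sOf (p : D n) : ℕ := if 2 ≤ aAt p 0 then 1 else 0

open Classical in
/-- the level of an element: least j with x ∈ F j -/
noncomputable def levOf (p : D n) (x : Fin n) : Option ℕ :=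
  if h : ∃ j, x ∈ Fat p j then some (Nat.find h) else none

noncomputable def alphaOf (p : D n) (x : Fin n) : Option ℕ :=
  (levOf p x).map (· + sOf p)

noncomputable def fOf (p : D n) (j : ℕ) : ℕ :=
  if 1 ≤ j ∧ j - sOf p < p.1 then
    aAt p (j - sOf p) - (if j - sOf p = 0 then 1 else 0)
  else 0

open Classical in
noncomputable def tOf (α : Fin n → Option ℕ) : ℕ :=
  if ∃ i, α i = some 0 then 0 else 1

open Classical in
noncomputable def kOf (α : Fin n → Option ℕ) : ℕ :=
  if ∀ i, α i = none then 0 else maxValE α + 1 - tOf α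

noncomputable def Fb (α : Fin n → Option ℕ) (j : ℕ) : Finset (Fin n) :=
  univ.filter fun i => (α i).isSome ∧ (α i).getD 0 ≤ j + tOf α

noncomputable def ab (α : Fin n → Option ℕ) (f : ℕ → ℕ) (j : ℕ) : ℕ :=
  if j = 0 then (if tOf α = 0 then 1 else f 1 + 1) else f (j + tOf α)

noncomputable def bwd (α : Fin n → Option ℕ) (f : ℕ → ℕ) : D n :=
  ⟨kOf α, fun j => Fb α j, fun j => ab α f j⟩

/-! basic lemmas -/

lemma bwd_fst (α : Fin n → Option ℕ) (f : ℕ → ℕ) : (bwd α f).1 = kOf α := rfl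

lemma Fat_none {p : D n} {j : ℕ} (h : ¬ j < p.1) : Fat p j = ∅ := dif_neg h

lemma aAt_none {p : D n} {j : ℕ} (h : ¬ j < p.1) : aAt p j = 0 := dif_neg h

lemma Fat_bwd (α : Fin n → Option ℕ) (f : ℕ → ℕ) {j : ℕ} (h : j < kOf α) :
    Fat (bwd α f) j = Fb α j := dif_pos h

lemma Fat_bwd' (α : Fin n → Option ℕ) (f : ℕ → ℕ) {j : ℕ} (h : ¬ j < kOf α) :
    Fat (bwd α f) j = ∅ := dif_neg h

lemma aAt_bwd (α : Fin n → Option ℕ) (f : ℕ → ℕ) {j : ℕ} (h : j < kOf α) :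
    aAt (bwd α f) j = ab α f j := dif_pos h

lemma sOf01 (p : D n) : sOf p = 0 ∨ sOf p = 1 := by unfold sOf; split_ifs <;> simp

lemma tOf01 (α : Fin n → Option ℕ) : tOf α = 0 ∨ tOf α = 1 := by
  unfold tOf; split_ifs <;> simp

lemma D.ext {p q : D n} (h : p.1 = q.1) (hF : ∀ j, Fat p j = Fat q j)
    (ha : ∀ j, aAt p j = aAt q j) : p = q := by
  obtain ⟨k, F, a⟩ := p
  obtain ⟨k', F', a'⟩ := q
  dsimp only at h
  subst h
  have hF' : F = F' := by
    funext j
    have h1 := hF j.1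
    unfold Fat at h1
    rw [dif_pos j.2, dif_pos j.2] at h1
    simpa using h1
  have ha' : a = a' := by
    funext j
    have h1 := ha j.1
    unfold aAt at h1
    rw [dif_pos j.2, dif_pos j.2] at h1
    simpa using h1
  rw [hF', ha']

lemma mem_Fat {p : D n} {j : ℕ} {x : Fin n} :
    x ∈ Fat p j ↔ ∃ h : j < p.1, x ∈ p.2.1 ⟨j, h⟩ := by
  unfold Fat
  split_ifs with h
  · simp [h]
  · simp [h]

lemma Fat_subset {p : D n} (hs : StrictMono p.2.1) {i j : ℕ} (hij : i ≤ j)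
    (hj : j < p.1) : Fat p i ⊆ Fat p j := by
  intro x hx
  rw [mem_Fat] at hx ⊢
  obtain ⟨hi, hxi⟩ := hx
  exact ⟨hj, Finset.le_iff_subset.mp (hs.monotone (Fin.mk_le_mk.mpr hij)) hxi⟩

lemma lev_some_iff {p : D n} {x : Fin n} {m : ℕ} :
    levOf p x = some m ↔ x ∈ Fat p m ∧ ∀ j < m, x ∉ Fat p j := by
  classical
  unfold levOf
  split_ifs with h
  · rw [Option.some_inj]
    exact Nat.find_eq_iff h
  · constructor
    · intro hx
      cases hx
    · rintro ⟨h1, -⟩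
      exact absurd ⟨m, h1⟩ h

lemma lev_none_iff {p : D n} {x : Fin n} :
    levOf p x = none ↔ ∀ j, x ∉ Fat p j := by
  unfold levOf
  split_ifs with h
  · constructor
    · intro hx
      cases hx
    · intro hall
      obtain ⟨j, hj⟩ := h
      exact absurd hj (hall j)
  · constructor
    · intro _ j hj
      exact h ⟨j, hj⟩
    · intro _
      rfl

lemma lev_lt {p : D n} {x : Fin n} {m : ℕ} (h : levOf p x = some m) : m < p.1 := by
  obtain ⟨h1, -⟩ := lev_some_iff.1 h
  obtain ⟨hm, -⟩ := mem_Fat.1 h1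
  exact hm

lemma mem_Fat_iff_lev {p : D n} (hs : StrictMono p.2.1) {x : Fin n} {j : ℕ}
    (hj : j < p.1) : x ∈ Fat p j ↔ ∃ m, levOf p x = some m ∧ m ≤ j := by
  constructor
  · intro hx
    rcases hlev : levOf p x with _ | m
    · exact absurd hx (lev_none_iff.1 hlev j)
    · refine ⟨m, rfl, ?_⟩
      by_contra hgt
      push_neg at hgt
      exact (lev_some_iff.1 hlev).2 j hgt hx
  · rintro ⟨m, hm, hmj⟩
    exact Fat_subset hs hmj hj (lev_some_iff.1 hm).1

lemma lev_fiber {p : D n} (hs : StrictMono p.2.1) {m : ℕ} (hm : m < p.1) :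
    univ.filter (fun x => levOf p x = some m) = Fat p m \ prevF p m := by
  ext x
  simp only [mem_filter, mem_univ, true_and, mem_sdiff]
  rw [lev_some_iff]
  cases m with
  | zero => simp [prevF]
  | succ m =>
    simp only [prevF, Nat.succ_ne_zero, if_false, Nat.add_sub_cancel]
    constructor
    · rintro ⟨h1, h2⟩
      exact ⟨h1, h2 m (Nat.lt_succ_self m)⟩
    · rintro ⟨h1, h2⟩
      refine ⟨h1, fun j hj hxj => h2 ?_⟩
      exact Fat_subset hs (Nat.lt_succ_iff.1 hj) (Nat.lt_of_succ_lt hm) hxj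

lemma prevF_subset {p : D n} (hs : StrictMono p.2.1) {m : ℕ} (hm : m < p.1) :
    prevF p m ⊆ Fat p m := by
  unfold prevF
  split_ifs with h
  · exact empty_subset _
  · exact Fat_subset hs (Nat.sub_le m 1) hm

lemma prevSet_eq {p : D n} (i : Fin p.1) : prevSet p.2.1 i = prevF p i.1 := by
  have hi := i.isLt
  unfold prevSet prevF Fat
  split_ifs <;> first | rfl | omega

lemma occ_filter {α : Fin n → Option ℕ} {v : ℕ} :
    occE α v = (univ.filter fun x => α x = some v).card := rfl

lemma alpha_some_iff {p : D n} {x : Fin n} {v : ℕ} :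
    alphaOf p x = some v ↔ ∃ m, levOf p x = some m ∧ m + sOf p = v := by
  unfold alphaOf
  rw [Option.map_eq_some_iff]

lemma occ_alpha {p : D n} (hs : StrictMono p.2.1) {m : ℕ} (hm : m < p.1) :
    occE (alphaOf p) (m + sOf p) = (Fat p m).card - (prevF p m).card := by
  have hfil : ∀ x : Fin n, alphaOf p x = some (m + sOf p) ↔ levOf p x = some m := by
    intro x
    rw [alpha_some_iff]
    constructor
    · rintro ⟨m', hm', he⟩
      obtain rfl : m' = m := by omega
      exact hm'
    · intro h
      exact ⟨m, h, rfl⟩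
  rw [occ_filter]
  have hset : (univ.filter fun x => alphaOf p x = some (m + sOf p)) =
      Fat p m \ prevF p m := by
    rw [← lev_fiber hs hm]
    ext x
    simp [hfil x]
  rw [hset, card_sdiff_of_subset (prevF_subset hs hm)]

/-! lemmas using IsAugFY -/

lemma aAt_pos {p : D n} (hp : IsAugFY p) {m : ℕ} (hm : m < p.1) : 1 ≤ aAt p m := by
  have h := (hp.2 ⟨m, hm⟩).1
  unfold aAt
  rw [dif_pos hm]
  exact h

lemma key_card {p : D n} (hp : IsAugFY p) {m : ℕ} (hm : m < p.1) :
    (prevF p m).card + aAt p m + (if m = 0 then 0 else 1) ≤ (Fat p m).card := by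
  have h2 := (hp.2 ⟨m, hm⟩).2
  rw [prevSet_eq] at h2
  unfold aAt Fat
  rw [dif_pos hm, dif_pos hm]
  simp only [Fin.val_mk] at h2 ⊢
  split_ifs at h2 ⊢ with h0
  · have : prevF p m = ∅ := by simp [prevF, h0]
    rw [this]
    simpa using h2
  · omega

lemma sOf_a0 {p : D n} (hp : IsAugFY p) (hk : 0 < p.1) (h : sOf p = 0) :
    aAt p 0 = 1 := by
  have h1 := aAt_pos hp hk
  unfold sOf at h
  split_ifs at h with h2
  omega

lemma sOf_a0' {p : D n} (h : sOf p = 1) : 2 ≤ aAt p 0 := by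
  unfold sOf at h
  split_ifs at h with h2
  exact h2

lemma exists_lev_top {p : D n} (hp : IsAugFY p) (hk : 0 < p.1) :
    ∃ x, levOf p x = some (p.1 - 1) := by
  have hm : p.1 - 1 < p.1 := Nat.sub_lt hk one_pos
  have hcard : (prevF p (p.1 - 1)).card < (Fat p (p.1 - 1)).card := by
    have h2 := key_card hp hm
    have h1 := aAt_pos hp hm
    rcases eq_or_ne (p.1 - 1) 0 with h0 | h0
    · have hpe : prevF p 0 = ∅ := by simp [prevF]
      rw [h0] at h2 h1 ⊢
      rw [hpe] at h2 ⊢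
      have h2' : aAt p 0 ≤ (Fat p 0).card := by simpa using h2
      simp only [card_empty]
      omega
    · rw [if_neg h0] at h2
      omega
  have hne : (Fat p (p.1 - 1) \ prevF p (p.1 - 1)).Nonempty := by
    rw [← card_pos, card_sdiff_of_subset (prevF_subset hp.1 hm)]
    omega
  obtain ⟨x, hx⟩ := hne
  refine ⟨x, ?_⟩
  have hfib := lev_fiber hp.1 hm
  have hmem : x ∈ univ.filter fun y => levOf p y = some (p.1 - 1) := hfib ▸ hx
  simpa using hmem

lemma maxVal_alpha {p : D n} (hp : IsAugFY p) (hk : 0 < p.1) :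
    maxValE (alphaOf p) = p.1 - 1 + sOf p := by
  apply le_antisymm
  · apply Finset.sup_le
    intro x _
    rcases hlev : levOf p x with _ | m
    · simp [alphaOf, hlev]
    · have := lev_lt hlev
      simp only [alphaOf, hlev, Option.map_some, Option.getD_some]
      omega
  · obtain ⟨x, hx⟩ := exists_lev_top hp hk
    have hval : (alphaOf p x).getD 0 = p.1 - 1 + sOf p := by simp [alphaOf, hx]
    have hle : (alphaOf p x).getD 0 ≤ maxValE (alphaOf p) :=
      Finset.le_sup (f := fun i => (alphaOf p i).getD 0) (mem_univ x)
    omega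

lemma alpha_all_none {p : D n} (hk : p.1 = 0) : ∀ x, alphaOf p x = none := by
  intro x
  have h : levOf p x = none := lev_none_iff.2 fun j hj => by
    obtain ⟨hlt, -⟩ := mem_Fat.1 hj
    omega
  simp [alphaOf, h]

lemma alpha_not_all_none {p : D n} (hp : IsAugFY p) (hk : 0 < p.1) :
    ¬ ∀ x, alphaOf p x = none := by
  intro hall
  obtain ⟨x, hx⟩ := exists_lev_top hp hk
  have h := hall x
  simp [alphaOf, hx] at h

lemma occ_alpha_ge {p : D n} (hp : IsAugFY p) {v : ℕ} (h1 : 1 ≤ v)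
    (h2 : v ≤ maxValE (alphaOf p)) (hk : 0 < p.1) :
    sOf p ≤ v ∧ v - sOf p < p.1 ∧
      occE (alphaOf p) v = (Fat p (v - sOf p)).card - (prevF p (v - sOf p)).card := by
  have hM := maxVal_alpha hp hk
  have hs1 := sOf01 p
  have hsv : sOf p ≤ v := by omega
  have hvk : v - sOf p < p.1 := by omega
  refine ⟨hsv, hvk, ?_⟩
  have hc : v - sOf p + sOf p = v := Nat.sub_add_cancel hsv
  calc occE (alphaOf p) v = occE (alphaOf p) (v - sOf p + sOf p) := by rw [hc]
  _ = _ := occ_alpha hp.1 hvk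

lemma fwd_code {p : D n} (hp : IsAugFY p) : IsExtCode (alphaOf p) (fOf p) := by
  rcases Nat.eq_zero_or_pos p.1 with hk | hk
  · have hα := alpha_all_none (p := p) hk
    have hM : maxValE (alphaOf p) = 0 := by
      apply Nat.eq_zero_of_le_zero
      apply Finset.sup_le
      intro x _
      simp [hα x]
    refine ⟨fun v h1 h2 => by omega, fun v h1 h2 => by omega, fun v _ => ?_⟩
    unfold fOf
    rw [if_neg]
    push_neg
    intro _
    omega
  · have hM := maxVal_alpha hp hk
    have hs1 := sOf01 p
    refine ⟨?_, ?_, ?_⟩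
    · intro v h1 h2
      obtain ⟨hsv, hvk, hocc⟩ := occ_alpha_ge hp h1 h2 hk
      rw [hocc]
      have hkey := key_card hp hvk
      have hpos := aAt_pos hp hvk
      have hle := card_le_card (prevF_subset hp.1 hvk)
      rcases eq_or_ne (v - sOf p) 0 with h0 | h0
      · have hs : sOf p = 1 := by omega
        have ha2 : 2 ≤ aAt p 0 := sOf_a0' hs
        have hpe : prevF p 0 = ∅ := by simp [prevF]
        rw [h0, hpe] at hkey ⊢
        have hkey' : aAt p 0 ≤ (Fat p 0).card := by simpa using hkey
        simp only [card_empty, Nat.sub_zero]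
        omega
      · rw [if_neg h0] at hkey
        omega
    · intro v h1 h2
      obtain ⟨hsv, hvk, hocc⟩ := occ_alpha_ge hp h1 h2 hk
      have hkey := key_card hp hvk
      have hpos := aAt_pos hp hvk
      have hle := card_le_card (prevF_subset hp.1 hvk)
      unfold fOf
      rw [if_pos ⟨h1, hvk⟩, hocc]
      rcases eq_or_ne (v - sOf p) 0 with h0 | h0
      · have hs : sOf p = 1 := by omega
        have ha2 : 2 ≤ aAt p 0 := sOf_a0' hs
        have hpe : prevF p 0 = ∅ := by simp [prevF]
        rw [h0, hpe] at hkey ⊢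
        have hkey' : aAt p 0 ≤ (Fat p 0).card := by simpa using hkey
        clear hkey
        simp only [card_empty, Nat.sub_zero]
        split_ifs <;> omega
      · rw [if_neg h0] at hkey ⊢
        omega
    · intro v hv
      unfold fOf
      rw [if_neg]
      rcases hv with rfl | hv
      · simp
      · rw [hM] at hv
        push_neg
        intro _
        omega

lemma fwd_index {p : D n} (hp : IsAugFY p) :
    extIndex (alphaOf p) (fOf p) + 1 = (FYdeg p : ℤ) := by
  rcases Nat.eq_zero_or_pos p.1 with hk | hk
  · have hall := alpha_all_none (p := p) hk
    unfold extIndex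
    rw [if_pos hall]
    have h0 : FYdeg p = 0 :=
      Finset.sum_eq_zero fun i _ => absurd i.2 (by omega)
    rw [h0]
    norm_num
  · unfold extIndex
    rw [if_neg (alpha_not_all_none hp hk), maxVal_alpha hp hk]
    have hdeg : FYdeg p = ∑ m ∈ Finset.range p.1, aAt p m := by
      unfold FYdeg
      rw [← Fin.sum_univ_eq_sum_range (fun m => aAt p m) p.1]
      apply Finset.sum_congr rfl
      intro i _
      unfold aAt
      rw [dif_pos i.2]
    have hrange : Finset.range p.1 = insert 0 (Icc 1 (p.1 - 1)) := by
      ext m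
      simp only [Finset.mem_range, Finset.mem_insert, Finset.mem_Icc]
      omega
    have hnot : (0 : ℕ) ∉ Icc 1 (p.1 - 1) := by simp
    have key : (∑ v ∈ Icc 1 (p.1 - 1 + sOf p), fOf p v) + 1 = FYdeg p := by
      rcases sOf01 p with hs | hs
      · have ha0 : aAt p 0 = 1 := sOf_a0 hp hk hs
        have hsum : ∑ v ∈ Icc 1 (p.1 - 1), fOf p v = ∑ v ∈ Icc 1 (p.1 - 1), aAt p v := by
          apply Finset.sum_congr rfl
          intro v hv
          rw [Finset.mem_Icc] at hv
          unfold fOf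
          rw [hs, if_pos ⟨hv.1, by omega⟩, if_neg (by omega)]
          simp
        rw [hs]
        simp only [Nat.add_zero]
        rw [hdeg, hrange, Finset.sum_insert hnot, ha0, hsum]
        omega
      · have ha2 := sOf_a0' hs
        rw [hs, hdeg, hrange, Finset.sum_insert hnot,
          show p.1 - 1 + 1 = p.1 by omega]
        have hIcc : Icc 1 p.1 = insert 1 (Icc 2 p.1) := by
          ext m
          simp only [Finset.mem_Icc, Finset.mem_insert]
          omega
        rw [hIcc, Finset.sum_insert (by simp)]
        have hf1 : fOf p 1 = aAt p 0 - 1 := by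
          unfold fOf
          rw [hs, if_pos ⟨le_rfl, by omega⟩, if_pos (by omega)]
        have hrest : ∑ v ∈ Icc 2 p.1, fOf p v = ∑ m ∈ Icc 1 (p.1 - 1), aAt p m := by
          have hmap : Icc 2 p.1 = (Icc 1 (p.1 - 1)).map (addRightEmbedding 1) := by
            rw [Finset.map_add_right_Icc]
            congr 1 <;> omega
          rw [hmap, Finset.sum_map]
          apply Finset.sum_congr rfl
          intro m hm
          rw [Finset.mem_Icc] at hm
          show fOf p (m + 1) = aAt p m
          unfold fOf
          rw [hs, if_pos ⟨by omega, by omega⟩, if_neg (by omega)]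
          simp
        rw [hf1, hrest]
        omega
    rw [← key]
    push_cast
    ring

/-! backward lemmas -/

lemma mem_Fb {α : Fin n → Option ℕ} {j : ℕ} {x : Fin n} :
    x ∈ Fb α j ↔ ∃ v, α x = some v ∧ v ≤ j + tOf α := by
  simp only [Fb, mem_filter, mem_univ, true_and]
  constructor
  · rintro ⟨h1, h2⟩
    rcases hv : α x with _ | v
    · rw [hv] at h1
      simp at h1
    · refine ⟨v, rfl, ?_⟩
      rwa [hv, Option.getD_some] at h2
  · rintro ⟨v, hv, hle⟩
    rw [hv]
    exact ⟨rfl, by simpa using hle⟩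

lemma tOf_no_zero {α : Fin n → Option ℕ} (h : tOf α = 1) :
    ∀ x, α x ≠ some 0 := by
  intro x hx
  unfold tOf at h
  split_ifs at h with h0
  exact h0 ⟨x, hx⟩

lemma val_le_max {α : Fin n → Option ℕ} {x : Fin n} {v : ℕ} (h : α x = some v) :
    v ≤ maxValE α := by
  have hval : (α x).getD 0 = v := by rw [h]; rfl
  have hle : (α x).getD 0 ≤ maxValE α :=
    Finset.le_sup (f := fun i => (α i).getD 0) (mem_univ x)
  omega

lemma tOf_le_val {α : Fin n → Option ℕ} {x : Fin n} {v : ℕ} (hx : α x = some v) :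
    tOf α ≤ v := by
  rcases tOf01 α with h | h
  · omega
  · rcases Nat.eq_zero_or_pos v with h0 | h0
    · exact absurd (h0 ▸ hx) (tOf_no_zero h x)
    · omega

lemma tOf_le_max {α : Fin n → Option ℕ} (h : ¬ ∀ i, α i = none) :
    tOf α ≤ maxValE α := by
  rcases tOf01 α with h0 | h0
  · omega
  · push_neg at h
    obtain ⟨i, hi⟩ := h
    rcases hv : α i with _ | v
    · exact absurd hv hi
    · have h1 := val_le_max hv
      have h2 := tOf_le_val hv
      omega

lemma exists_val {α : Fin n → Option ℕ} {f : ℕ → ℕ} (hc : IsExtCode α f)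
    {v : ℕ} (h1 : 1 ≤ v) (h2 : v ≤ maxValE α) : ∃ x, α x = some v := by
  have hocc := hc.1 v h1 h2
  rw [occ_filter] at hocc
  have hne : (univ.filter fun x => α x = some v).Nonempty := card_pos.1 (by omega)
  obtain ⟨x, hx⟩ := hne
  exact ⟨x, (mem_filter.1 hx).2⟩

lemma bwd_FY {α : Fin n → Option ℕ} {f : ℕ → ℕ} (hc : IsExtCode α f) :
    IsAugFY (bwd α f) := by
  have hb := bwd_fst α f
  by_cases hall : ∀ i, α i = none
  · have hk : kOf α = 0 := by unfold kOf; rw [if_pos hall]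
    constructor
    · intro i j hij
      exfalso
      have := i.2
      omega
    · intro i
      exfalso
      have := i.2
      omega
  · have hM := tOf_le_max hall
    have hk : kOf α = maxValE α + 1 - tOf α := by unfold kOf; rw [if_neg hall]
    have ht01 := tOf01 α
    obtain ⟨hocc, hf, hf0⟩ := hc
    constructor
    · intro i j hij
      have hij' : i.1 < j.1 := hij
      have hik : i.1 < kOf α := by have := i.2; omega
      have hjk : j.1 < kOf α := by have := j.2; omega
      rw [Finset.lt_iff_ssubset]
      show Fb α i.1 ⊂ Fb α j.1
      rw [Finset.ssubset_def]
      constructor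
      · intro x hx
        rw [mem_Fb] at hx ⊢
        obtain ⟨v, hv, hle⟩ := hx
        exact ⟨v, hv, by omega⟩
      · intro hsub
        obtain ⟨x, hx⟩ := exists_val ⟨hocc, hf, hf0⟩ (v := j.1 + tOf α)
          (by omega) (by omega)
        have hxj : x ∈ Fb α j.1 := mem_Fb.2 ⟨_, hx, le_rfl⟩
        have hxi := hsub hxj
        rw [mem_Fb] at hxi
        obtain ⟨v, hv, hle⟩ := hxi
        rw [hx] at hv
        have := Option.some.inj hv
        omega
    · intro i
      have hik : i.1 < kOf α := by have := i.2; omega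
      have hav : (bwd α f).2.2 i = ab α f i.1 := rfl
      have hFv : (bwd α f).2.1 i = Fb α i.1 := rfl
      by_cases hi0 : i.1 = 0
      · rw [hav, hFv]
        unfold ab
        rw [if_pos hi0]
        rw [if_pos hi0]
        rcases ht01 with ht | ht
        · rw [if_pos ht]
          refine ⟨le_rfl, ?_⟩
          have hex : ∃ x, α x = some 0 := by
            unfold tOf at ht
            split_ifs at ht with h0
            exact h0
          obtain ⟨x, hx⟩ := hex
          have hmem : x ∈ Fb α i.1 := mem_Fb.2 ⟨0, hx, by omega⟩
          have := card_pos.2 ⟨x, hmem⟩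
          omega
        · rw [if_neg (show ¬ tOf α = 0 by omega)]
          refine ⟨by omega, ?_⟩
          have hM1 : 1 ≤ maxValE α := by omega
          have hFb0 : Fb α i.1 = univ.filter fun x => α x = some 1 := by
            ext x
            rw [mem_Fb, mem_filter]
            simp only [mem_univ, true_and]
            constructor
            · rintro ⟨v, hv, hle⟩
              have hv0 : v ≠ 0 := fun h' => tOf_no_zero ht x (h' ▸ hv)
              have : v = 1 := by omega
              exact this ▸ hv
            · intro hx
              exact ⟨1, hx, by omega⟩
          have hocc1 := hocc 1 le_rfl hM1
          have hf1 := hf 1 le_rfl hM1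
          rw [occ_filter] at hocc1 hf1
          rw [hFb0]
          omega
      · rw [hav, hFv]
        rw [if_neg hi0]
        unfold ab
        rw [if_neg hi0]
        have hprev : prevSet (bwd α f).2.1 i = Fb α (i.1 - 1) := by
          rw [prevSet_eq]
          unfold prevF
          rw [if_neg hi0]
          exact Fat_bwd α f (by omega)
        rw [hprev]
        have h1v : 1 ≤ i.1 + tOf α := by omega
        have hvM : i.1 + tOf α ≤ maxValE α := by omega
        have hfv := hf (i.1 + tOf α) h1v hvM
        have hoccv := hocc (i.1 + tOf α) h1v hvM
        rw [occ_filter] at hfv hoccv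
        have hdiff : Fb α i.1 \ Fb α (i.1 - 1) =
            univ.filter fun x => α x = some (i.1 + tOf α) := by
          ext x
          rw [mem_sdiff, mem_Fb, mem_Fb, mem_filter]
          simp only [mem_univ, true_and]
          constructor
          · rintro ⟨⟨v, hv, hle⟩, hni⟩
            have hgt : ¬ v ≤ (i.1 - 1) + tOf α := fun hle' => hni ⟨v, hv, hle'⟩
            have : v = i.1 + tOf α := by omega
            exact this ▸ hv
          · intro hx
            refine ⟨⟨_, hx, le_rfl⟩, ?_⟩
            rintro ⟨v, hv, hle⟩
            rw [hx] at hv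
            have := Option.some.inj hv
            omega
        have hsub : Fb α (i.1 - 1) ⊆ Fb α i.1 := by
          intro x hx
          rw [mem_Fb] at hx ⊢
          obtain ⟨v, hv, hle⟩ := hx
          exact ⟨v, hv, by omega⟩
        have hcards := Finset.card_sdiff_of_subset hsub
        rw [hdiff] at hcards
        have hle' := card_le_card hsub
        refine ⟨by omega, by omega⟩

lemma bwd_fwd {p : D n} (hp : IsAugFY p) : bwd (alphaOf p) (fOf p) = p := by
  have hb := bwd_fst (alphaOf p) (fOf p)
  rcases Nat.eq_zero_or_pos p.1 with hk | hk
  · have hall := alpha_all_none (p := p) hk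
    have hk' : kOf (alphaOf p) = 0 := by unfold kOf; rw [if_pos hall]
    apply D.ext
    · show kOf (alphaOf p) = p.1
      omega
    · intro j
      rw [Fat_bwd' _ _ (by omega), Fat_none (by omega)]
    · intro j
      rw [show aAt (bwd (alphaOf p) (fOf p)) j = 0 from dif_neg (by omega),
        aAt_none (by omega)]
  · have hs01 := sOf01 p
    have hM := maxVal_alpha hp hk
    have hnall := alpha_not_all_none hp hk
    have ht : tOf (alphaOf p) = sOf p := by
      unfold tOf
      split_ifs with h0
      · obtain ⟨x, hx⟩ := h0
        obtain ⟨m, hm, he⟩ := alpha_some_iff.1 hx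
        omega
      · rcases hs01 with hs | hs
        · exfalso
          have h2 := key_card hp hk
          have hne : (Fat p 0).Nonempty := by
            rw [← card_pos]
            simp only [if_pos rfl] at h2
            have : prevF p 0 = ∅ := by simp [prevF]
            rw [this] at h2
            simp only [card_empty] at h2
            have := aAt_pos hp hk
            omega
          obtain ⟨x, hx0⟩ := hne
          have hlev : levOf p x = some 0 := lev_some_iff.2 ⟨hx0, by omega⟩
          exact h0 ⟨x, alpha_some_iff.2 ⟨0, hlev, by omega⟩⟩
        · omega
    have hkk : kOf (alphaOf p) = p.1 := by
      unfold kOf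
      rw [if_neg hnall, hM, ht]
      omega
    apply D.ext
    · exact hkk
    · intro j
      by_cases hj : j < p.1
      · rw [Fat_bwd _ _ (by omega)]
        ext x
        rw [mem_Fb, mem_Fat_iff_lev hp.1 hj, ht]
        constructor
        · rintro ⟨v, hv, hle⟩
          obtain ⟨m, hm, he⟩ := alpha_some_iff.1 hv
          exact ⟨m, hm, by omega⟩
        · rintro ⟨m, hm, hle⟩
          exact ⟨m + sOf p, alpha_some_iff.2 ⟨m, hm, rfl⟩, by omega⟩
      · rw [Fat_bwd' _ _ (by omega), Fat_none hj]
    · intro j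
      by_cases hj : j < p.1
      · rw [aAt_bwd _ _ (by omega)]
        unfold ab
        rw [ht]
        by_cases hj0 : j = 0
        · subst hj0
          rw [if_pos rfl]
          rcases hs01 with hs | hs
          · rw [if_pos hs, sOf_a0 hp hk hs]
          · rw [if_neg (show ¬ sOf p = 0 by omega)]
            have h2 := sOf_a0' hs
            unfold fOf
            rw [hs, if_pos ⟨le_rfl, show (1:ℕ) - 1 < p.1 by omega⟩,
              if_pos (show (1:ℕ) - 1 = 0 by omega)]
            show aAt p (1 - 1) - 1 + 1 = aAt p 0
            norm_num
            omega
        · rw [if_neg hj0]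
          unfold fOf
          simp only [Nat.add_sub_cancel]
          rw [if_pos ⟨by omega, hj⟩, if_neg hj0]
          simp
      · rw [show aAt (bwd (alphaOf p) (fOf p)) j = 0 from dif_neg (by omega),
          aAt_none hj]

lemma sOf_bwd {α : Fin n → Option ℕ} {f : ℕ → ℕ} (hc : IsExtCode α f)
    (hnall : ¬ ∀ i, α i = none) : sOf (bwd α f) = tOf α := by
  have hM := tOf_le_max hnall
  have hk : kOf α = maxValE α + 1 - tOf α := by unfold kOf; rw [if_neg hnall]
  have ht01 := tOf01 α
  have hkpos : 0 < kOf α := by omega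
  have ha0 : aAt (bwd α f) 0 = ab α f 0 := aAt_bwd _ _ hkpos
  unfold sOf
  rw [ha0]
  unfold ab
  rcases ht01 with h | h
  · rw [h]
    have hab : (if (0:ℕ) = 0 then (if (0:ℕ) = 0 then 1 else f 1 + 1)
        else f (0 + 0)) = 1 := by norm_num
    rw [hab, if_neg (show ¬ 2 ≤ 1 by omega)]
  · rw [h]
    have hf1 := (hc.2.1 1 le_rfl (by omega)).1
    have hab : (if (0:ℕ) = 0 then (if (1:ℕ) = 0 then 1 else f 1 + 1)
        else f (0 + 1)) = f 1 + 1 := by norm_num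
    rw [hab, if_pos (show 2 ≤ f 1 + 1 by omega)]

lemma lev_bwd_none {α : Fin n → Option ℕ} {f : ℕ → ℕ} {x : Fin n}
    (hx : α x = none) : levOf (bwd α f) x = none := by
  apply lev_none_iff.2
  intro j hmem
  obtain ⟨hjk, hmem'⟩ := mem_Fat.1 hmem
  have hmem'' : x ∈ Fb α j := hmem'
  rw [mem_Fb] at hmem''
  obtain ⟨v, hv, -⟩ := hmem''
  rw [hx] at hv
  cases hv

lemma lev_bwd {α : Fin n → Option ℕ} {f : ℕ → ℕ} (hc : IsExtCode α f)
    {x : Fin n} {v : ℕ} (hx : α x = some v) :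
    levOf (bwd α f) x = some (v - tOf α) := by
  have hnall : ¬ ∀ i, α i = none := fun h => by rw [h x] at hx; cases hx
  have hM := tOf_le_max hnall
  have hvM := val_le_max hx
  have hk : kOf α = maxValE α + 1 - tOf α := by unfold kOf; rw [if_neg hnall]
  have htv := tOf_le_val hx
  apply lev_some_iff.2
  constructor
  · rw [Fat_bwd _ _ (by omega), mem_Fb]
    exact ⟨v, hx, by omega⟩
  · intro j hj hmem
    obtain ⟨hjk, hmem'⟩ := mem_Fat.1 hmem
    have hmem'' : x ∈ Fb α j := hmem'
    rw [mem_Fb] at hmem''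
    obtain ⟨v', hv', hle⟩ := hmem''
    rw [hx] at hv'
    have := Option.some.inj hv'
    omega

lemma fwd_bwd_alpha {α : Fin n → Option ℕ} {f : ℕ → ℕ} (hc : IsExtCode α f) :
    alphaOf (bwd α f) = α := by
  funext x
  rcases hx : α x with _ | v
  · unfold alphaOf
    rw [lev_bwd_none hx, Option.map_none]
  · have hnall : ¬ ∀ i, α i = none := fun h => by rw [h x] at hx; cases hx
    unfold alphaOf
    rw [lev_bwd hc hx, sOf_bwd hc hnall, Option.map_some]
    have htv := tOf_le_val hx
    simp only [Option.some.injEq]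
    omega

lemma fwd_bwd_f {α : Fin n → Option ℕ} {f : ℕ → ℕ} (hc : IsExtCode α f) :
    fOf (bwd α f) = f := by
  funext j
  have hb := bwd_fst α f
  have ht01 := tOf01 α
  by_cases hall : ∀ i, α i = none
  · have hM : maxValE α = 0 := by
      apply Nat.eq_zero_of_le_zero
      apply Finset.sup_le
      intro x _
      simp [hall x]
    have hk0 : kOf α = 0 := by unfold kOf; rw [if_pos hall]
    have h1 : fOf (bwd α f) j = 0 := by
      unfold fOf
      rw [if_neg]
      push_neg
      intro _
      omega
    rw [h1]
    rcases Nat.eq_zero_or_pos j with h0 | h0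
    · rw [h0, hc.2.2 0 (Or.inl rfl)]
    · rw [hc.2.2 j (Or.inr (by omega))]
  · have hM := tOf_le_max hall
    have hk : kOf α = maxValE α + 1 - tOf α := by unfold kOf; rw [if_neg hall]
    have hs := sOf_bwd hc hall
    unfold fOf
    rw [hs]
    by_cases hcond : 1 ≤ j ∧ j - tOf α < (bwd α f).1
    · rw [if_pos hcond]
      obtain ⟨hj1, hjk⟩ := hcond
      have hjk' : j - tOf α < kOf α := by omega
      rw [aAt_bwd _ _ hjk']
      unfold ab
      by_cases h0 : j - tOf α = 0
      · have ht1 : tOf α = 1 := by omega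
        have hj1' : j = 1 := by omega
        rw [if_pos h0, if_neg (show ¬ tOf α = 0 by omega), if_pos h0, hj1']
        omega
      · rw [if_neg h0, if_neg h0, Nat.sub_add_cancel (by omega : tOf α ≤ j)]
        omega
    · rw [if_neg hcond]
      rcases Nat.eq_zero_or_pos j with h0 | h0
      · rw [h0, hc.2.2 0 (Or.inl rfl)]
      · have hbig : ¬ j - tOf α < (bwd α f).1 := fun h => hcond ⟨h0, h⟩
        rw [hc.2.2 j (Or.inr (by omega))]

/-! equivariance -/

lemma Fat_perm {p : D n} (σ : Equiv.Perm (Fin n)) (j : ℕ) :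
    Fat (permFY σ p) j = (Fat p j).image σ := by
  unfold Fat permFY
  split_ifs with h
  · rfl
  · simp

lemma sOf_perm {p : D n} (σ : Equiv.Perm (Fin n)) : sOf (permFY σ p) = sOf p := rfl

lemma perm_alpha {p : D n} (σ : Equiv.Perm (Fin n)) :
    alphaOf (permFY σ p) = alphaOf p ∘ ⇑σ⁻¹ := by
  funext x
  show (levOf (permFY σ p) x).map (· + sOf (permFY σ p)) =
    (levOf p (σ⁻¹ x)).map (· + sOf p)
  have hiff : ∀ j, x ∈ Fat (permFY σ p) j ↔ σ⁻¹ x ∈ Fat p j := by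
    intro j
    rw [Fat_perm]
    constructor
    · intro hx
      obtain ⟨y, hy, he⟩ := Finset.mem_image.1 hx
      have hyx : y = σ⁻¹ x := by rw [← he]; simp
      rwa [← hyx]
    · intro hx
      exact Finset.mem_image.2 ⟨σ⁻¹ x, hx, by simp⟩
  have hl : levOf (permFY σ p) x = levOf p (σ⁻¹ x) := by
    rcases h : levOf p (σ⁻¹ x) with _ | m
    · rw [lev_none_iff] at h ⊢
      intro j hj
      exact h j ((hiff j).1 hj)
    · rw [lev_some_iff] at h ⊢
      exact ⟨(hiff _).2 h.1, fun j hj hx => h.2 j hj ((hiff j).1 hx)⟩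
  rw [hl, sOf_perm]

lemma perm_f {p : D n} (σ : Equiv.Perm (Fin n)) : fOf (permFY σ p) = fOf p :=
  rfl

end Stmt9

open Stmt9 in
noncomputable def stmt9E (n : ℕ) : AugFYBn n ≃ ExtCode n where
  toFun u := ⟨(alphaOf u.1, fOf u.1), fwd_code u.2⟩
  invFun c := ⟨bwd c.1.1 c.1.2, bwd_FY c.2⟩
  left_inv u := Subtype.ext (bwd_fwd u.2)
  right_inv c := Subtype.ext (by
    obtain ⟨⟨α, f⟩, hc⟩ := c
    show (alphaOf (bwd α f), fOf (bwd α f)) = (α, f)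
    rw [fwd_bwd_alpha hc, fwd_bwd_f hc])

theorem stmt9 (n : ℕ) :
    ∃ e : AugFYBn n ≃ ExtCode n,
      (∀ u : AugFYBn n,
        extIndex (e u).1.1 (e u).1.2 + 1 = (FYdeg u.1 : ℤ)) ∧
      (∀ (σ : Equiv.Perm (Fin n)) (u v : AugFYBn n), v.1 = permFY σ u.1 →
        (e v).1.1 = (e u).1.1 ∘ ⇑σ⁻¹ ∧ (e v).1.2 = (e u).1.2) := by
  refine ⟨stmt9E n, fun u => Stmt9.fwd_index u.2, fun σ u v hv => ?_⟩
  constructor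
  · show Stmt9.alphaOf v.1 = Stmt9.alphaOf u.1 ∘ ⇑σ⁻¹
    rw [hv, Stmt9.perm_alpha]
  · show Stmt9.fOf v.1 = Stmt9.fOf u.1
    rw [hv, Stmt9.perm_f]
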